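/- With notation as above, extend by defining $y_n := \sum_{i=1}^{p+1} (-1)^{i-1} x_i y_{n-i}$ for integers $n \ge p+2$. Then $\Phi(y_n) \in \mathbb{Z}_p[t_1,\dots,t_{p+1}]$ for all $n \ge 1$, and for all $n \ge p+2$ the mod-$p$ reductions satisfy $\overline{\Phi(y_n)} = \overline{t_p}\,\overline{\Phi(y_{n-p})} + \overline{t_{p+1}}\,\overline{\Phi(y_{n-p-1})}$. -/

import Mathlib

open MvPolynomial

/-- The algebra map `Φ` sending `y_i ↦ p t_i` for `i ≤ p` and `y_{p+1} ↦ t_{p+1}`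
(variables indexed by `ℕ`, variable `i` standing for `y_i` resp. `t_i`). -/
noncomputable def Phi (p : ℕ) : MvPolynomial ℕ ℚ →ₐ[ℚ] MvPolynomial ℕ ℚ :=
  MvPolynomial.aeval fun i =>
    if i ≤ p then (p : MvPolynomial ℕ ℚ) * MvPolynomial.X i else MvPolynomial.X i

/-- All coefficients are `p`-integral. -/
def CoeffsPIntegral (p : ℕ) (f : MvPolynomial ℕ ℚ) : Prop :=
  ∀ m : ℕ →₀ ℕ, MvPolynomial.coeff m f = 0 ∨ 0 ≤ padicValRat p (MvPolynomial.coeff m f)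

/-- All coefficients are divisible by `p` (i.e. the reduction mod `p` vanishes). -/
def CoeffsDivP (p : ℕ) (f : MvPolynomial ℕ ℚ) : Prop :=
  ∀ m : ℕ →₀ ℕ, MvPolynomial.coeff m f = 0 ∨ 1 ≤ padicValRat p (MvPolynomial.coeff m f)
section Aux

set_option linter.unusedSectionVars false

/-- `padicNorm` of every coefficient is at most 1. -/
def PInt (p : ℕ) (f : MvPolynomial ℕ ℚ) : Prop := ∀ m, padicNorm p (coeff m f) ≤ 1

/-- `padicNorm` of every coefficient is less than 1. -/
def PDiv (p : ℕ) (f : MvPolynomial ℕ ℚ) : Prop := ∀ m, padicNorm p (coeff m f) < 1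

variable {p : ℕ} [hp : Fact p.Prime]

lemma PDiv.pint {f} (h : PDiv p f) : PInt p f := fun m => (h m).le

lemma pint_add {f g} (hf : PInt p f) (hg : PInt p g) : PInt p (f + g) := fun m => by
  rw [coeff_add]; exact padicNorm.nonarchimedean.trans (max_le (hf m) (hg m))

lemma pdiv_add {f g} (hf : PDiv p f) (hg : PDiv p g) : PDiv p (f + g) := fun m => by
  rw [coeff_add]; exact lt_of_le_of_lt padicNorm.nonarchimedean (max_lt (hf m) (hg m))

lemma pint_mul {f g} (hf : PInt p f) (hg : PInt p g) : PInt p (f * g) := fun m => by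
  rw [coeff_mul]
  refine padicNorm.sum_le' (fun i _ => ?_) zero_le_one
  rw [padicNorm.mul]
  exact mul_le_one₀ (hf _) (padicNorm.nonneg _) (hg _)

lemma pdiv_mul_left {f g} (hf : PDiv p f) (hg : PInt p g) : PDiv p (f * g) := fun m => by
  rw [coeff_mul]
  refine padicNorm.sum_lt' (fun i _ => ?_) one_pos
  rw [padicNorm.mul]
  calc padicNorm p (coeff i.1 f) * padicNorm p (coeff i.2 g)
      ≤ padicNorm p (coeff i.1 f) * 1 := mul_le_mul_of_nonneg_left (hg _) (padicNorm.nonneg _)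
    _ < 1 := by rw [mul_one]; exact hf _

lemma pdiv_mul_right {f g} (hf : PInt p f) (hg : PDiv p g) : PDiv p (f * g) := by
  rw [mul_comm]; exact pdiv_mul_left hg hf

lemma pint_sum {α} {s : Finset α} {F : α → MvPolynomial ℕ ℚ}
    (h : ∀ i ∈ s, PInt p (F i)) : PInt p (∑ i ∈ s, F i) := fun m => by
  rw [coeff_sum]; exact padicNorm.sum_le' (fun i hi => h i hi m) zero_le_one

lemma pdiv_sum {α} {s : Finset α} {F : α → MvPolynomial ℕ ℚ}
    (h : ∀ i ∈ s, PDiv p (F i)) : PDiv p (∑ i ∈ s, F i) := fun m => by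
  rw [coeff_sum]; exact padicNorm.sum_lt' (fun i hi => h i hi m) one_pos

lemma pint_one : PInt p (1 : MvPolynomial ℕ ℚ) := fun m => by
  rw [coeff_one]; split_ifs <;> simp [padicNorm.one, padicNorm.zero]

lemma pint_X (i : ℕ) : PInt p (X i : MvPolynomial ℕ ℚ) := fun m => by
  rw [coeff_X']; split_ifs <;> simp [padicNorm.one, padicNorm.zero]

lemma pint_smul {c : ℚ} {f} (hc : padicNorm p c ≤ 1) (hf : PInt p f) : PInt p (c • f) := fun m => by
  rw [coeff_smul, smul_eq_mul, padicNorm.mul]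
  exact mul_le_one₀ hc (padicNorm.nonneg _) (hf m)

lemma pdiv_smul {c : ℚ} {f} (hc : padicNorm p c ≤ 1) (hf : PDiv p f) : PDiv p (c • f) := fun m => by
  rw [coeff_smul, smul_eq_mul, padicNorm.mul]
  calc padicNorm p c * padicNorm p (coeff m f) ≤ 1 * padicNorm p (coeff m f) :=
        mul_le_mul_of_nonneg_right hc (padicNorm.nonneg _)
    _ < 1 := by rw [one_mul]; exact hf m

lemma pdiv_smul_of_lt {c : ℚ} {f} (hc : padicNorm p c < 1) (hf : PInt p f) :
    PDiv p (c • f) := fun m => by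
  rw [coeff_smul, smul_eq_mul, padicNorm.mul]
  calc padicNorm p c * padicNorm p (coeff m f) ≤ padicNorm p c * 1 :=
        mul_le_mul_of_nonneg_left (hf m) (padicNorm.nonneg _)
    _ < 1 := by rw [mul_one]; exact hc

lemma ppc : ((p : MvPolynomial ℕ ℚ)) = C ((p : ℕ) : ℚ) :=
  (map_natCast (C : ℚ →+* MvPolynomial ℕ ℚ) p).symm

lemma pdiv_pmul {f} (hf : PInt p f) : PDiv p ((p : MvPolynomial ℕ ℚ) * f) := fun m => by
  rw [ppc, coeff_C_mul, padicNorm.mul]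
  calc padicNorm p ((p:ℕ):ℚ) * padicNorm p (coeff m f)
      ≤ padicNorm p ((p:ℕ):ℚ) * 1 := mul_le_mul_of_nonneg_left (hf m) (padicNorm.nonneg _)
    _ < 1 := by
        rw [mul_one]
        exact padicNorm.padicNorm_p_lt_one hp.out.one_lt

lemma pint_neg_one_pow (i : ℕ) : PInt p ((-1 : MvPolynomial ℕ ℚ) ^ i) := by
  induction i with
  | zero => simpa using pint_one
  | succ n ih =>
      rw [pow_succ]
      intro m
      rw [mul_neg_one, coeff_neg, padicNorm.neg]
      exact ih m

lemma padicNorm_inv_nat {n : ℕ} (h0 : n ≠ 0) (hd : ¬ p ∣ n) : padicNorm p ((n : ℚ)⁻¹) = 1 := by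
  have h1 : padicNorm p (n : ℚ) = 1 := (padicNorm.nat_eq_one_iff n).2 hd
  have h2 := (padicNorm.mul (p := p) ((n : ℚ)⁻¹) (n : ℚ)).symm
  rw [inv_mul_cancel₀ (by exact_mod_cast h0), padicNorm.one, h1, mul_one] at h2
  exact h2

lemma PInt.coeffs {f} (h : PInt p f) : CoeffsPIntegral p f := by
  intro m
  by_cases h0 : coeff m f = 0
  · exact Or.inl h0
  · right
    have hm := h m
    rw [padicNorm.eq_zpow_of_nonzero h0] at hm
    by_contra hv
    push_neg at hv
    have h1 : (1:ℚ) < (p:ℚ) := by exact_mod_cast hp.out.one_lt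
    have : (1:ℚ) < (p:ℚ) ^ (-padicValRat p (coeff m f)) := one_lt_zpow₀ h1 (by linarith)
    linarith

lemma PDiv.coeffs {f} (h : PDiv p f) : CoeffsDivP p f := by
  intro m
  by_cases h0 : coeff m f = 0
  · exact Or.inl h0
  · right
    have hm := h m
    rw [padicNorm.eq_zpow_of_nonzero h0] at hm
    by_contra hv
    push_neg at hv
    have h1 : (1:ℚ) < (p:ℚ) := by exact_mod_cast hp.out.one_lt
    have : (1:ℚ) ≤ (p:ℚ) ^ (-padicValRat p (coeff m f)) := one_le_zpow₀ h1.le (by linarith)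
    linarith

end Aux

/-- With `x_n` given by Newton's recursion, `y_n = X n` for `1 ≤ n ≤ p+1`, and
`y_n := ∑_{i=1}^{p+1} (-1)^{i-1} x_i y_{n-i}` for `n ≥ p+2`: every `Φ(y_n)` is
`p`-integral, and mod `p` one has
`Φ(y_n) ≡ t_p Φ(y_{n-p}) + t_{p+1} Φ(y_{n-p-1})` for `n ≥ p+2`. -/
theorem phi_y_integrality_and_recurrence (p : ℕ) (hp : p.Prime)
    (x : ℕ → MvPolynomial ℕ ℚ)
    (hx0 : x 0 = 1)
    (hxr : ∀ n, 1 ≤ n → n ≤ p + 1 →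
      x n = (n : ℚ)⁻¹ • ∑ i ∈ Finset.range n,
        (-1 : MvPolynomial ℕ ℚ) ^ i * x (n - (i + 1)) * MvPolynomial.X (i + 1))
    (y : ℕ → MvPolynomial ℕ ℚ)
    (hy1 : ∀ n, 1 ≤ n → n ≤ p + 1 → y n = MvPolynomial.X n)
    (hyrec : ∀ n, p + 2 ≤ n →
      y n = ∑ i ∈ Finset.range (p + 1),
        (-1 : MvPolynomial ℕ ℚ) ^ i * x (i + 1) * y (n - (i + 1))) :
    (∀ n, 1 ≤ n → CoeffsPIntegral p (Phi p (y n))) ∧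
    (∀ n, p + 2 ≤ n →
      CoeffsDivP p (Phi p (y n) -
        (MvPolynomial.X p * Phi p (y (n - p)) +
          MvPolynomial.X (p + 1) * Phi p (y (n - p - 1))))) := by
  haveI hpf : Fact p.Prime := ⟨hp⟩
  have h2p := hp.two_le
  obtain ⟨q, rfl⟩ : ∃ q, p = q + 2 := ⟨p - 2, by omega⟩
  -- basic facts about Phi on variables
  have hPXle : ∀ i : ℕ, i ≤ q + 2 →
      Phi (q+2) (X i) = ((q+2 : ℕ) : MvPolynomial ℕ ℚ) * X i := by
    intro i hi
    simp only [Phi, aeval_X]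
    rw [if_pos hi]
  have hPXgt : Phi (q+2) (X (q+3)) = X (q+3) := by
    simp only [Phi, aeval_X]
    rw [if_neg (by omega)]
  -- Phi applied to Newton's recursion
  have key : ∀ n, 1 ≤ n → n ≤ q + 3 →
      Phi (q+2) (x n) = ((n : ℕ) : ℚ)⁻¹ • ∑ i ∈ Finset.range n,
        (-1 : MvPolynomial ℕ ℚ) ^ i * Phi (q+2) (x (n - (i+1))) * Phi (q+2) (X (i+1)) := by
    intro n h1 h2
    rw [hxr n h1 (by omega), map_smul, map_sum]
    refine congrArg _ (Finset.sum_congr rfl fun i _ => ?_)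
    rw [map_mul, map_mul, map_pow, map_neg, map_one]
  -- Step A : for n < p, Phi (x n) is integral, and divisible by p for 1 ≤ n
  have hA : ∀ n, n < q + 2 →
      PInt (q+2) (Phi (q+2) (x n)) ∧ (1 ≤ n → PDiv (q+2) (Phi (q+2) (x n))) := by
    intro n
    induction n using Nat.strong_induction_on with
    | _ n IH =>
      intro hn
      rcases Nat.eq_zero_or_pos n with rfl | h1
      · rw [hx0, map_one]
        exact ⟨pint_one, fun h => by omega⟩
      · have hdiv : PDiv (q+2) (Phi (q+2) (x n)) := by
          rw [key n h1 (by omega)]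
          refine pdiv_smul (le_of_eq (padicNorm_inv_nat (by omega)
            (fun hd => by have := Nat.le_of_dvd h1 hd; omega))) (pdiv_sum fun i hi => ?_)
          rw [Finset.mem_range] at hi
          rw [hPXle (i+1) (by omega)]
          exact pdiv_mul_right
            (pint_mul (pint_neg_one_pow i) (IH _ (by omega) (by omega)).1)
            (pdiv_pmul (pint_X _))
        exact ⟨hdiv.pint, fun _ => hdiv⟩
  -- Step B : Phi (x p)
  have hT : Phi (q+2) (x (q+2)) = ∑ i ∈ Finset.range (q+2),
      (-1 : MvPolynomial ℕ ℚ) ^ i * Phi (q+2) (x (q+2-(i+1))) * X (i+1) := by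
    rw [key (q+2) (by omega) (by omega)]
    have hs : ∑ i ∈ Finset.range (q+2),
        (-1 : MvPolynomial ℕ ℚ) ^ i * Phi (q+2) (x (q+2-(i+1))) * Phi (q+2) (X (i+1))
        = C (((q+2:ℕ)):ℚ) * ∑ i ∈ Finset.range (q+2),
        (-1 : MvPolynomial ℕ ℚ) ^ i * Phi (q+2) (x (q+2-(i+1))) * X (i+1) := by
      rw [Finset.mul_sum]
      refine Finset.sum_congr rfl fun i hi => ?_
      rw [Finset.mem_range] at hi
      rw [hPXle (i+1) (by omega), ppc]
      ring
    rw [hs, smul_eq_C_mul, ← mul_assoc, ← C_mul,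
      inv_mul_cancel₀ (by exact_mod_cast (by omega : (q+2:ℕ) ≠ 0)), C_1, one_mul]
  have hBsplit : Phi (q+2) (x (q+2)) =
      (∑ i ∈ Finset.range (q+1),
        (-1 : MvPolynomial ℕ ℚ) ^ i * Phi (q+2) (x (q+2-(i+1))) * X (i+1))
      + (-1 : MvPolynomial ℕ ℚ) ^ (q+1) * X (q+2) := by
    rw [hT, Finset.sum_range_succ]
    congr 1
    rw [show q+2-(q+1+1) = 0 from by omega, hx0, map_one, mul_one]
  have hrestB : PDiv (q+2) (∑ i ∈ Finset.range (q+1),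
      (-1 : MvPolynomial ℕ ℚ) ^ i * Phi (q+2) (x (q+2-(i+1))) * X (i+1)) := by
    refine pdiv_sum fun i hi => ?_
    rw [Finset.mem_range] at hi
    exact pdiv_mul_left
      (pdiv_mul_right (pint_neg_one_pow i) ((hA _ (by omega)).2 (by omega)))
      (pint_X _)
  have hBint : PInt (q+2) (Phi (q+2) (x (q+2))) := by
    rw [hBsplit]
    exact pint_add hrestB.pint (pint_mul (pint_neg_one_pow _) (pint_X _))
  have hBdiv : PDiv (q+2) (Phi (q+2) (x (q+2)) - (-1 : MvPolynomial ℕ ℚ) ^ (q+1) * X (q+2)) := by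
    have heq : Phi (q+2) (x (q+2)) - (-1 : MvPolynomial ℕ ℚ) ^ (q+1) * X (q+2)
        = ∑ i ∈ Finset.range (q+1),
          (-1 : MvPolynomial ℕ ℚ) ^ i * Phi (q+2) (x (q+2-(i+1))) * X (i+1) := by
      rw [hBsplit]; ring
    rw [heq]; exact hrestB
  -- Step C : Phi (x (p+1))
  have hCsplit : Phi (q+2) (x (q+3)) = (((q+3:ℕ)):ℚ)⁻¹ •
      ((∑ i ∈ Finset.range (q+2),
        (-1 : MvPolynomial ℕ ℚ) ^ i * Phi (q+2) (x (q+3-(i+1)))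
          * (((q+2 : ℕ) : MvPolynomial ℕ ℚ) * X (i+1)))
      + (-1 : MvPolynomial ℕ ℚ) ^ (q+2) * X (q+3)) := by
    rw [key (q+3) (by omega) (by omega), Finset.sum_range_succ]
    congr 1
    congr 1
    · refine Finset.sum_congr rfl fun i hi => ?_
      rw [Finset.mem_range] at hi
      rw [hPXle (i+1) (by omega)]
    · rw [show q+3-(q+2+1) = 0 from by omega, hx0, map_one, mul_one,
        show q+2+1 = q+3 from by omega, hPXgt]
  have hD : PDiv (q+2) (∑ i ∈ Finset.range (q+2),
      (-1 : MvPolynomial ℕ ℚ) ^ i * Phi (q+2) (x (q+3-(i+1)))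
        * (((q+2 : ℕ) : MvPolynomial ℕ ℚ) * X (i+1))) := by
    refine pdiv_sum fun i hi => ?_
    rw [Finset.mem_range] at hi
    have hxint : PInt (q+2) (Phi (q+2) (x (q+3-(i+1)))) := by
      rcases Nat.lt_or_ge (q+3-(i+1)) (q+2) with h | h
      · exact (hA _ h).1
      · rw [show q+3-(i+1) = q+2 from by omega]
        exact hBint
    exact pdiv_mul_right (pint_mul (pint_neg_one_pow i) hxint) (pdiv_pmul (pint_X _))
  have hc : padicNorm (q+2) ((((q+3:ℕ)):ℚ))⁻¹ = 1 := by
    refine padicNorm_inv_nat (by omega) (fun hd => ?_)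
    have h1 := Nat.dvd_sub hd (dvd_refl (q+2))
    rw [show q+3-(q+2) = 1 from by omega] at h1
    exact absurd (Nat.le_of_dvd one_pos h1) (by omega)
  have hCint : PInt (q+2) (Phi (q+2) (x (q+3))) := by
    rw [hCsplit]
    exact pint_smul hc.le (pint_add hD.pint (pint_mul (pint_neg_one_pow _) (pint_X _)))
  have hCdiv : PDiv (q+2) (Phi (q+2) (x (q+3)) - (-1 : MvPolynomial ℕ ℚ) ^ (q+2) * X (q+3)) := by
    have heq : Phi (q+2) (x (q+3)) - (-1 : MvPolynomial ℕ ℚ) ^ (q+2) * X (q+3)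
        = (((q+3:ℕ)):ℚ)⁻¹ • (∑ i ∈ Finset.range (q+2),
            (-1 : MvPolynomial ℕ ℚ) ^ i * Phi (q+2) (x (q+3-(i+1)))
              * (((q+2 : ℕ) : MvPolynomial ℕ ℚ) * X (i+1)))
          + ((((q+3:ℕ)):ℚ)⁻¹ - 1) • ((-1 : MvPolynomial ℕ ℚ) ^ (q+2) * X (q+3)) := by
      rw [hCsplit, smul_add, sub_smul, one_smul]
      abel
    rw [heq]
    refine pdiv_add (pdiv_smul hc.le hD)
      (pdiv_smul_of_lt ?_ (pint_mul (pint_neg_one_pow _) (pint_X _)))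
    have hval : ((((q+3:ℕ)):ℚ))⁻¹ - 1 = (-((q+2:ℕ):ℚ)) * ((((q+3:ℕ)):ℚ))⁻¹ := by
      have hne : ((q+3:ℕ):ℚ) ≠ 0 := by exact_mod_cast (by omega : (q+3:ℕ) ≠ 0)
      field_simp
      push_cast
      ring
    rw [hval, padicNorm.mul, padicNorm.neg, hc, mul_one]
    exact padicNorm.padicNorm_p_lt_one (by omega)
  -- all x are integral
  have hxint_all : ∀ k, 1 ≤ k → k ≤ q+3 → PInt (q+2) (Phi (q+2) (x k)) := by
    intro k h1 h2
    rcases Nat.lt_or_ge k (q+2) with h | h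
    · exact (hA k h).1
    · rcases Nat.eq_or_lt_of_le h with h' | h'
      · rw [← h']; exact hBint
      · rw [show k = q+3 from by omega]; exact hCint
  -- y integrality
  have hY : ∀ n, 1 ≤ n → PInt (q+2) (Phi (q+2) (y n)) := by
    intro n
    induction n using Nat.strong_induction_on with
    | _ n IH =>
      intro h1
      rcases Nat.lt_or_ge n (q+4) with h | h
      · rw [hy1 n h1 (by omega)]
        rcases Nat.lt_or_ge n (q+3) with h' | h'
        · rw [hPXle n (by omega)]
          exact (pdiv_pmul (pint_X n)).pint
        · rw [show n = q+3 from by omega, hPXgt]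
          exact pint_X _
      · rw [hyrec n (by omega), map_sum]
        refine pint_sum fun i hi => ?_
        rw [Finset.mem_range] at hi
        rw [map_mul, map_mul, map_pow, map_neg, map_one]
        exact pint_mul
          (pint_mul (pint_neg_one_pow i) (hxint_all (i+1) (by omega) (by omega)))
          (IH _ (by omega) (by omega))
  constructor
  · exact fun n h1 => (hY n h1).coeffs
  · intro n hn
    apply PDiv.coeffs
    rw [hyrec n hn, map_sum]
    simp only [map_mul, map_pow, map_neg, map_one]
    rw [Finset.sum_range_succ, Finset.sum_range_succ]
    rw [show q+1+1 = q+2 from by omega, show q+2+1 = q+3 from by omega,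
      show n - (q+2) - 1 = n - (q+3) from by omega]
    have hsq1 : ((-1 : MvPolynomial ℕ ℚ) ^ (q+1)) * ((-1 : MvPolynomial ℕ ℚ) ^ (q+1)) = 1 := by
      rw [← pow_add]; exact Even.neg_one_pow ⟨q+1, rfl⟩
    have hsq2 : ((-1 : MvPolynomial ℕ ℚ) ^ (q+2)) * ((-1 : MvPolynomial ℕ ℚ) ^ (q+2)) = 1 := by
      rw [← pow_add]; exact Even.neg_one_pow ⟨q+2, rfl⟩
    have hr1 : ((-1 : MvPolynomial ℕ ℚ) ^ (q+1)) *
        (Phi (q+2) (x (q+2)) - (-1 : MvPolynomial ℕ ℚ) ^ (q+1) * X (q+2))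
        = (-1 : MvPolynomial ℕ ℚ) ^ (q+1) * Phi (q+2) (x (q+2)) - X (q+2) := by
      rw [mul_sub, ← mul_assoc, hsq1, one_mul]
    have hr2 : ((-1 : MvPolynomial ℕ ℚ) ^ (q+2)) *
        (Phi (q+2) (x (q+3)) - (-1 : MvPolynomial ℕ ℚ) ^ (q+2) * X (q+3))
        = (-1 : MvPolynomial ℕ ℚ) ^ (q+2) * Phi (q+2) (x (q+3)) - X (q+3) := by
      rw [mul_sub, ← mul_assoc, hsq2, one_mul]
    have key_eq : (∑ i ∈ Finset.range (q+1),
          (-1 : MvPolynomial ℕ ℚ) ^ i * Phi (q+2) (x (i+1)) * Phi (q+2) (y (n - (i+1))))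
        + (-1 : MvPolynomial ℕ ℚ) ^ (q+1) * Phi (q+2) (x (q+2)) * Phi (q+2) (y (n - (q+2)))
        + (-1 : MvPolynomial ℕ ℚ) ^ (q+2) * Phi (q+2) (x (q+3)) * Phi (q+2) (y (n - (q+3)))
        - (X (q+2) * Phi (q+2) (y (n - (q+2))) + X (q+3) * Phi (q+2) (y (n - (q+3))))
        = (∑ i ∈ Finset.range (q+1),
          (-1 : MvPolynomial ℕ ℚ) ^ i * Phi (q+2) (x (i+1)) * Phi (q+2) (y (n - (i+1))))
        + ((-1 : MvPolynomial ℕ ℚ) ^ (q+1) *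
            (Phi (q+2) (x (q+2)) - (-1 : MvPolynomial ℕ ℚ) ^ (q+1) * X (q+2)))
            * Phi (q+2) (y (n - (q+2)))
        + ((-1 : MvPolynomial ℕ ℚ) ^ (q+2) *
            (Phi (q+2) (x (q+3)) - (-1 : MvPolynomial ℕ ℚ) ^ (q+2) * X (q+3)))
            * Phi (q+2) (y (n - (q+3))) := by
      rw [hr1, hr2]; ring
    rw [key_eq]
    refine pdiv_add (pdiv_add (pdiv_sum fun i hi => ?_) ?_) ?_
    · rw [Finset.mem_range] at hi
      exact pdiv_mul_left
        (pdiv_mul_right (pint_neg_one_pow i) ((hA (i+1) (by omega)).2 (by omega)))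
        (hY _ (by omega))
    · exact pdiv_mul_left (pdiv_mul_right (pint_neg_one_pow _) hBdiv) (hY _ (by omega))
    · exact pdiv_mul_left (pdiv_mul_right (pint_neg_one_pow _) hCdiv) (hY _ (by omega))
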